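/- Let Γ = G *_φ t be the HNN-extension of G by a stable letter t with respect to an isomorphism φ : A → B between subgroups A, B ≤ G. Suppose G' ≤ G satisfies φ(G' ∩ A) = G' ∩ B. Then the subgroup Γ' = ⟨G', t⟩ is the HNN-extension of G' by t with respect to the restriction of φ to G' ∩ A; moreover Γ' ∩ G = G', Γ' ∩ A = G' ∩ A, and Γ' ∩ B = G' ∩ B. -/

import Mathlib

namespace Stmt10

open HNNExtension HNNExtension.NormalWord

section Aux

variable {G : Type*} [Group G] {A B : Subgroup G} {φ : ↥A ≃* ↥B}

/-- comap of toSubgroup -/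
theorem toSubgroup_comap (G' : Subgroup G) (u : ℤˣ) :
    toSubgroup (A.comap G'.subtype) (B.comap G'.subtype) u
      = (toSubgroup A B u).comap G'.subtype := by
  rcases Int.units_eq_one_or u with rfl | rfl <;> rfl

/-- Key lemma: the induced homomorphism, applied to an element whose image is in
`of.range`, has a preimage in `of.range`. -/
theorem key (G' : Subgroup G)
    (ψ : ↥(A.comap G'.subtype) ≃* ↥(B.comap G'.subtype))
    (e : HNNExtension ↥G' (A.comap G'.subtype) (B.comap G'.subtype) ψ →*
        HNNExtension G A B φ)
    (he : ∀ g : ↥G', e (of g) = of (g : G)) (het : e t = t)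
    (x : HNNExtension ↥G' (A.comap G'.subtype) (B.comap G'.subtype) ψ)
    (hx : e x ∈ (of : G →* HNNExtension G A B φ).range) :
    ∃ g' : ↥G', x = of g' := by
  classical
  rcases (HNNExtension.NormalWord.TransversalPair.nonempty ↥G' (A.comap G'.subtype) (B.comap G'.subtype)) with ⟨d⟩
  set w := (NormalWord.equiv ψ d) x with hw
  have hwx : w.prod ψ = x := (NormalWord.equiv ψ d).left_inv x
  -- map the reduced word to one over G
  let w' : ReducedWord G A B :=
    { head := (w.head : G)
      toList := w.toList.map (fun p => (p.1, (p.2 : G)))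
      chain := by
        rw [List.isChain_map]
        refine w.chain.imp ?_
        rintro ⟨u, g⟩ ⟨u₂, g₂⟩ h hmem
        exact h (by rw [toSubgroup_comap]; exact hmem) }
  have hprod : w'.prod φ = e x := by
    rw [← hwx]
    simp only [ReducedWord.prod, w', map_mul, he, map_list_prod, List.map_map]
    refine congr_arg _ (congr_arg _ (List.map_congr_left fun p _ => ?_))
    simp only [Function.comp_apply, map_mul, map_zpow, he, het]
  have hnil := ReducedWord.toList_eq_nil_of_mem_of_range φ w' (by rw [hprod]; exact hx)
  have hnil' : w.toList = [] := by
    simpa [w'] using hnil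
  refine ⟨w.head, ?_⟩
  rw [← hwx]
  simp [ReducedWord.prod, hnil']; exact mul_one (of (φ := ψ) w.head)

end Aux

/-- Lemma on subgroups of an HNN-extension `Γ = G *_φ t` with respect to an
isomorphism `φ : A ≃* B` of subgroups `A, B ≤ G`: if `G' ≤ G` satisfies
`φ(G' ∩ A) = G' ∩ B`, then `Γ' = ⟨G', t⟩` is the HNN-extension of `G'` by `t`
with respect to the restriction `ψ` of `φ` to `G' ∩ A` (there is an injective
homomorphism from that HNN-extension onto `Γ'` compatible with the inclusions
and sending stable letter to stable letter); moreover `Γ' ∩ G = G'`,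
`Γ' ∩ A = G' ∩ A` and `Γ' ∩ B = G' ∩ B`. -/
theorem subgroups_in_HNN_extension
    {G : Type*} [Group G] (A B : Subgroup G) (φ : ↥A ≃* ↥B) (G' : Subgroup G)
    -- `φ(G' ∩ A) = G' ∩ B`:
    (hG' : ∀ a : ↥A, (a : G) ∈ G' ↔ ((φ a : ↥B) : G) ∈ G')
    -- `ψ` is the restriction of `φ` to `A' = G' ∩ A`, an isomorphism onto `B' = G' ∩ B`:
    (ψ : ↥(A.comap G'.subtype) ≃* ↥(B.comap G'.subtype))
    (hψ : ∀ x : ↥(A.comap G'.subtype),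
      ((ψ x : ↥G') : G) = ((φ ⟨((x : ↥G') : G), x.2⟩ : ↥B) : G)) :
    ∀ Γ' : Subgroup (HNNExtension G A B φ),
      Γ' = (G'.map (of : G →* HNNExtension G A B φ)) ⊔
           Subgroup.closure {(t : HNNExtension G A B φ)} →
      -- (1) `Γ' = G' *_ψ t`:
      (∃ e : HNNExtension ↥G' (A.comap G'.subtype) (B.comap G'.subtype) ψ →*
          HNNExtension G A B φ,
        Function.Injective e ∧ e.range = Γ' ∧
        (∀ g : ↥G', e (of g) = of (g : G)) ∧ e t = t) ∧
      -- (2) `Γ' ∩ G = G'`: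
      Γ'.comap (of : G →* HNNExtension G A B φ) = G' ∧
      -- (3) `Γ' ∩ A = G' ∩ A` and `Γ' ∩ B = G' ∩ B`:
      (∀ a : ↥A, of (a : G) ∈ Γ' ↔ (a : G) ∈ G') ∧
      (∀ b : ↥B, of (b : G) ∈ Γ' ↔ (b : G) ∈ G') := by
  intro Γ' hΓ'
  -- the induced homomorphism
  let e : HNNExtension ↥G' (A.comap G'.subtype) (B.comap G'.subtype) ψ →*
      HNNExtension G A B φ :=
    HNNExtension.lift ((of : G →* HNNExtension G A B φ).comp G'.subtype) t
      (by
        intro a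
        have h1 := t_mul_of (φ := φ) ⟨((a : ↥G') : G), a.2⟩
        simp only [MonoidHom.comp_apply]
        rw [Subgroup.coe_subtype, h1, hψ a])
  have he : ∀ g : ↥G', e (of g) = of (g : G) := fun g => lift_of _ _ _ _
  have het : e t = t := lift_t _ _ _
  have hker := key (φ := φ) G' ψ e he het
  have hrange : e.range = Γ' := by
    apply le_antisymm
    · rintro _ ⟨x, rfl⟩
      induction x using induction_on with
      | of g => rw [he]; rw [hΓ']
                exact Subgroup.mem_sup_left ⟨(g : G), g.2, rfl⟩
      | t => rw [het, hΓ']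
             exact Subgroup.mem_sup_right (Subgroup.subset_closure rfl)
      | mul x y hx hy => rw [map_mul]; exact mul_mem hx hy
      | inv x hx => rw [map_inv]; exact inv_mem hx
    · rw [hΓ']
      refine sup_le ?_ ?_
      · rintro _ ⟨g, hg, rfl⟩
        exact ⟨of ⟨g, hg⟩, he ⟨g, hg⟩⟩
      · rw [Subgroup.closure_le]
        rintro _ rfl
        exact ⟨t, het⟩
  have hinj : Function.Injective e := by
    rw [injective_iff_map_eq_one]
    intro x hx
    obtain ⟨g', rfl⟩ := hker x (by rw [hx]; exact one_mem _)
    rw [he] at hx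
    have : (g' : G) = 1 := of_injective (φ := φ) (by simpa using hx)
    have : g' = 1 := Subtype.ext this
    rw [this, map_one]
  have hcomap : Γ'.comap (of : G →* HNNExtension G A B φ) = G' := by
    ext g
    simp only [Subgroup.mem_comap]
    constructor
    · intro hg
      rw [← hrange] at hg
      obtain ⟨x, hx⟩ := hg
      obtain ⟨g', rfl⟩ := hker x ⟨g, hx.symm⟩
      rw [he] at hx
      have := of_injective (φ := φ) hx
      rw [← this]; exact g'.2
    · intro hg
      rw [← hrange]
      exact ⟨of ⟨g, hg⟩, he ⟨g, hg⟩⟩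
  refine ⟨⟨e, hinj, hrange, he, het⟩, hcomap, ?_, ?_⟩
  · intro a
    rw [← hcomap]; rfl
  · intro b
    rw [← hcomap]; rfl


end Stmt10
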